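/- (Theorem 2, sufficient condition, Ψ⁻ branch) Let B be a real n×m matrix, C a real m×n matrix, and let 𝒟 = {Δ ∈ ℝ^m : Δⱼ⁻ ≤ Δⱼ ≤ Δⱼ⁺ for all j} with 0 ≤ Δⱼ⁻ ≤ Δⱼ⁺. Let J₂, J₄ be real symmetric n×n matrices with J₄ negative semidefinite and J₂ + κ̄² J₄ negative definite for some κ̄ > 0. Write J(Δ,κ) = B·diag(Δ)·C + κ² J₂ + κ⁴ J₄. Assume that for every Δ ∈ 𝒟, the characteristic polynomial of B·diag(Δ)·C has 0 as a root of multiplicity exactly one and all its other complex roots have negative real part. If there exists κ̂ > 0 such that det(−J(Δ,κ)) > 0 for all κ ∈ (0, κ̂) and all Δ ∈ 𝒟 (Ψ⁻ initially positive), and there exist κ* > 0 and Δ* ∈ 𝒟 with det(−J(Δ*,κ*)) < 0 (Ψ⁻ has a negative sign change), then there exists Δ ∈ 𝒟 exhibiting microphase separation. -/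

import Mathlib

open Matrix Polynomial

/-- The combined Jacobian `J(Δ,κ) = B ⬝ diag(Δ) ⬝ C + κ² J₂ + κ⁴ J₄`. -/
noncomputable def Jmat {n m : ℕ} (B : Matrix (Fin n) (Fin m) ℝ) (C : Matrix (Fin m) (Fin n) ℝ)
    (J2 J4 : Matrix (Fin n) (Fin n) ℝ) (Δ : Fin m → ℝ) (κ : ℝ) : Matrix (Fin n) (Fin n) ℝ :=
  B * Matrix.diagonal Δ * C + κ ^ 2 • J2 + κ ^ 4 • J4

/-- Every eigenvalue of the real matrix `M` (root in `ℂ` of its characteristic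
polynomial) has negative real part. -/
def AllEigNegRe {n : ℕ} (M : Matrix (Fin n) (Fin n) ℝ) : Prop :=
  ∀ μ : ℂ, ((M.charpoly).map (algebraMap ℝ ℂ)).IsRoot μ → μ.re < 0

/-- Some eigenvalue of the real matrix `M` has positive real part. -/
def SomeEigPosRe {n : ℕ} (M : Matrix (Fin n) (Fin n) ℝ) : Prop :=
  ∃ μ : ℂ, ((M.charpoly).map (algebraMap ℝ ℂ)).IsRoot μ ∧ 0 < μ.re

/-- The parameter `Δ` exhibits microphase separation: there exist
`0 < κ̂ < κ₁ < κ₂` such that all eigenvalues of `J(Δ,κ)` have negative real part for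
`κ ∈ (0,κ̂)`, some eigenvalue of `J(Δ,κ₁)` has positive real part, and all eigenvalues
of `J(Δ,κ₂)` have negative real part. -/
def Microphase {n m : ℕ} (B : Matrix (Fin n) (Fin m) ℝ) (C : Matrix (Fin m) (Fin n) ℝ)
    (J2 J4 : Matrix (Fin n) (Fin n) ℝ) (Δ : Fin m → ℝ) : Prop :=
  ∃ κhat κ1 κ2 : ℝ, 0 < κhat ∧ κhat < κ1 ∧ κ1 < κ2 ∧
    (∀ κ : ℝ, 0 < κ → κ < κhat → AllEigNegRe (Jmat B C J2 J4 Δ κ)) ∧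
    SomeEigPosRe (Jmat B C J2 J4 Δ κ1) ∧
    AllEigNegRe (Jmat B C J2 J4 Δ κ2)


lemma charpoly_eval' {R : Type*} [CommRing R] {n : ℕ} (M : Matrix (Fin n) (Fin n) R) (z : R) :
    M.charpoly.eval z = (z • (1 : Matrix (Fin n) (Fin n) R) - M).det := by
  rw [Matrix.charpoly, ← Polynomial.coe_evalRingHom, RingHom.map_det]
  congr 1
  ext i j
  simp [Matrix.charmatrix_apply, Matrix.one_apply, Matrix.diagonal_apply, Matrix.smul_apply,
    apply_ite (eval z)]

lemma charpoly_eval_zero {R : Type*} [CommRing R] {n : ℕ} (M : Matrix (Fin n) (Fin n) R) :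
    M.charpoly.eval 0 = (-M).det := by
  rw [charpoly_eval']
  congr 1
  simp

lemma geom00 (k : ℕ) :
    (∑ i ∈ Finset.range k, (0:ℂ)^i * 0^(k-1-i)) = if k = 1 then 1 else 0 := by
  match k with
  | 0 => simp
  | 1 => simp
  | (k+2) =>
    rw [if_neg (by omega)]
    apply Finset.sum_eq_zero
    intro i _
    rcases Nat.eq_zero_or_pos i with h | h
    · subst h
      rw [pow_zero, one_mul, zero_pow (by omega)]
    · rw [zero_pow (by omega), zero_mul]

lemma eig_vector {n : ℕ} (M : Matrix (Fin n) (Fin n) ℝ) (μ : ℂ)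
    (h : ((M.charpoly).map (algebraMap ℝ ℂ)).IsRoot μ) :
    ∃ v : Fin n → ℂ, v ≠ 0 ∧ (M.map (algebraMap ℝ ℂ)) *ᵥ v = μ • v := by
  rw [← Matrix.charpoly_map M (algebraMap ℝ ℂ)] at h
  rw [Polynomial.IsRoot, charpoly_eval'] at h
  obtain ⟨v, hv, hmv⟩ := (Matrix.exists_mulVec_eq_zero_iff).2 h
  refine ⟨v, hv, ?_⟩
  rw [Matrix.sub_mulVec, Matrix.smul_mulVec, Matrix.one_mulVec, sub_eq_zero] at hmv
  exact hmv.symm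

lemma re_star_dot {n : ℕ} (M : Matrix (Fin n) (Fin n) ℝ) (v : Fin n → ℂ) :
    (star v ⬝ᵥ ((M.map (algebraMap ℝ ℂ)) *ᵥ v)).re
      = (fun i => (v i).re) ⬝ᵥ (M *ᵥ fun i => (v i).re)
        + (fun i => (v i).im) ⬝ᵥ (M *ᵥ fun i => (v i).im) := by
  simp only [dotProduct, mulVec, Pi.star_apply, Matrix.map_apply, Finset.mul_sum,
    ← Finset.sum_add_distrib, Complex.re_sum]
  refine Finset.sum_congr rfl fun i _ => ?_
  refine Finset.sum_congr rfl fun j _ => ?_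
  simp [Complex.mul_re, Complex.mul_im, RCLike.star_def, Complex.ofReal_re, Complex.ofReal_im]

lemma star_dot_self' {n : ℕ} (v : Fin n → ℂ) :
    star v ⬝ᵥ v = ((∑ i, Complex.normSq (v i) : ℝ) : ℂ) := by
  simp [dotProduct, Complex.normSq_eq_conj_mul_self, RCLike.star_def]

lemma eig_re_lt_of_quadform {n : ℕ} (M : Matrix (Fin n) (Fin n) ℝ)
    (hq : ∀ x : Fin n → ℝ, x ≠ 0 → x ⬝ᵥ M.mulVec x < 0) (μ : ℂ)
    (h : ((M.charpoly).map (algebraMap ℝ ℂ)).IsRoot μ) : μ.re < 0 := by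
  obtain ⟨v, hv, hmv⟩ := eig_vector M μ h
  set t : ℝ := ∑ i, Complex.normSq (v i) with ht
  have htpos : 0 < t := by
    obtain ⟨i, hi⟩ := Function.ne_iff.1 hv
    exact Finset.sum_pos' (fun j _ => Complex.normSq_nonneg _)
      ⟨i, Finset.mem_univ i, by simpa [Complex.normSq_pos] using hi⟩
  have key : (star v ⬝ᵥ ((M.map (algebraMap ℝ ℂ)) *ᵥ v)).re = μ.re * t := by
    rw [hmv, dotProduct_smul, star_dot_self']
    simp [Complex.mul_re, ← ht]
  have hquad : ∀ x : Fin n → ℝ, x ⬝ᵥ M.mulVec x ≤ 0 := by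
    intro x
    by_cases hx : x = 0
    · simp [hx]
    · exact (hq x hx).le
  have hxy : (fun i => (v i).re) ≠ 0 ∨ (fun i => (v i).im) ≠ 0 := by
    by_contra hcon
    push_neg at hcon
    apply hv
    funext i
    have h1 := congrFun hcon.1 i
    have h2 := congrFun hcon.2 i
    simp only [Pi.zero_apply] at h1 h2 ⊢
    exact Complex.ext h1 h2
  have hneg : (star v ⬝ᵥ ((M.map (algebraMap ℝ ℂ)) *ᵥ v)).re < 0 := by
    rw [re_star_dot]
    rcases hxy with hx | hy
    · exact add_neg_of_neg_of_nonpos (hq _ hx) (hquad _)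
    · exact add_neg_of_nonpos_of_neg (hquad _) (hq _ hy)
  rw [key] at hneg
  nlinarith

lemma eig_abs_le {n : ℕ} (M : Matrix (Fin n) (Fin n) ℝ) (μ : ℂ)
    (v : Fin n → ℂ) (hv : v ≠ 0) (hmv : (M.map (algebraMap ℝ ℂ)) *ᵥ v = μ • v) :
    ‖μ‖ ≤ ∑ i, ∑ j, |M i j| := by
  set t : ℝ := ∑ i, Complex.normSq (v i) with ht
  have htpos : 0 < t := by
    obtain ⟨i, hi⟩ := Function.ne_iff.1 hv
    exact Finset.sum_pos' (fun j _ => Complex.normSq_nonneg _)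
      ⟨i, Finset.mem_univ i, by simpa [Complex.normSq_pos] using hi⟩
  have hbd : ∀ i, ‖v i‖ ≤ Real.sqrt t := by
    intro i
    rw [← Real.sqrt_sq (norm_nonneg _)]
    apply Real.sqrt_le_sqrt
    rw [Complex.sq_norm]
    exact Finset.single_le_sum (fun j _ => Complex.normSq_nonneg _) (Finset.mem_univ i)
  have key : μ * t = ∑ i, ∑ j, star (v i) * ((algebraMap ℝ ℂ) (M i j) * v j) := by
    rw [← star_dot_self' v, ← smul_eq_mul, ← dotProduct_smul, ← hmv]
    simp [dotProduct, mulVec, Matrix.map_apply, Finset.mul_sum]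
  have habs : ‖μ‖ * t ≤ (∑ i, ∑ j, |M i j|) * t := by
    have h1 : ‖μ * t‖ ≤ ∑ i, ∑ j, |M i j| * t := by
      rw [key]
      refine le_trans (norm_sum_le _ _) (Finset.sum_le_sum fun i _ => ?_)
      refine le_trans (norm_sum_le _ _) (Finset.sum_le_sum fun j _ => ?_)
      rw [norm_mul, norm_mul, norm_star]
      have : ‖(algebraMap ℝ ℂ) (M i j)‖ = |M i j| := by
        simp
      rw [this, ← mul_assoc, mul_comm ‖v i‖,
        mul_assoc]
      refine mul_le_mul_of_nonneg_left ?_ (abs_nonneg _)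
      calc ‖v i‖ * ‖v j‖ ≤ Real.sqrt t * Real.sqrt t :=
        mul_le_mul (hbd i) (hbd j) (norm_nonneg _) (Real.sqrt_nonneg _)
      _ = t := Real.mul_self_sqrt htpos.le
    calc ‖μ‖ * t = ‖μ * t‖ := by
          rw [norm_mul, Complex.norm_of_nonneg htpos.le]
      _ ≤ ∑ i, ∑ j, |M i j| * t := h1
      _ = (∑ i, ∑ j, |M i j|) * t := by
            rw [Finset.sum_mul]
            exact Finset.sum_congr rfl fun i _ => (Finset.sum_mul _ _ _).symm
  exact le_of_mul_le_mul_right habs htpos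

lemma monic_pos_at_zero (q : ℝ[X]) (hm : q.Monic) (hr : ∀ t : ℝ, 0 ≤ t → ¬q.IsRoot t) :
    0 < q.eval 0 := by
  have h0 : q.eval 0 ≠ 0 := hr 0 le_rfl
  rcases lt_or_gt_of_ne h0 with hneg | hpos
  · exfalso
    have hdeg : 0 < q.degree := by
      rcases Nat.eq_zero_or_pos q.natDegree with h | h
      · have : q = 1 := hm.natDegree_eq_zero.1 h
        rw [this] at hneg; norm_num at hneg
      · rwa [← natDegree_pos_iff_degree_pos]
    have htend := Polynomial.tendsto_atTop_of_leadingCoeff_nonneg q hdeg (by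
      rw [hm.leadingCoeff]; norm_num)
    obtain ⟨x0, hx0⟩ := (htend.eventually_ge_atTop 1).exists_forall_of_atTop
    have hx1 : (1:ℝ) ≤ q.eval (max x0 0) := hx0 _ (le_max_left _ _)
    have : (0:ℝ) ∈ Set.Icc (q.eval 0) (q.eval (max x0 0)) := ⟨hneg.le, by linarith⟩
    obtain ⟨s, hs, hqs⟩ := intermediate_value_Icc (le_max_right x0 0) q.continuous.continuousOn this
    exact hr s hs.1 hqs
  · exact hpos

lemma coeff_one_pos {n : ℕ} (hn : 0 < n) (A : Matrix (Fin n) (Fin n) ℝ)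
    (hmult : ((A.charpoly).map (algebraMap ℝ ℂ)).rootMultiplicity 0 = 1)
    (hre : ∀ z : ℂ, ((A.charpoly).map (algebraMap ℝ ℂ)).IsRoot z → z ≠ 0 → z.re < 0) :
    0 < A.charpoly.coeff 1 := by
  set p := A.charpoly with hp
  have hmonic : p.Monic := A.charpoly_monic
  have hpdeg : p.natDegree = n := by
    rw [hp, Matrix.charpoly_natDegree_eq_dim, Fintype.card_fin]
  have hmapne : p.map (algebraMap ℝ ℂ) ≠ 0 := (hmonic.map _).ne_zero
  have htr : (p.map (algebraMap ℝ ℂ)).natTrailingDegree = 1 := by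
    rw [← Polynomial.rootMultiplicity_eq_natTrailingDegree', hmult]
  have hc0 : p.coeff 0 = 0 := by
    have : (p.map (algebraMap ℝ ℂ)).coeff 0 = 0 :=
      coeff_eq_zero_of_lt_natTrailingDegree (by rw [htr]; norm_num)
    rw [coeff_map] at this
    exact (algebraMap ℝ ℂ).injective (by simpa using this)
  have hc1 : p.coeff 1 ≠ 0 := by
    have : (p.map (algebraMap ℝ ℂ)).coeff 1 ≠ 0 := by
      rw [← htr]
      exact trailingCoeff_nonzero_iff_nonzero.2 hmapne
    rw [coeff_map] at this
    exact fun h => this (by rw [h]; simp)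
  set q := p.divX with hq
  have hpq : q * X = p := by
    have := p.divX_mul_X_add
    rwa [hc0, map_zero, add_zero] at this
  have hq0 : q.coeff 0 = p.coeff 1 := p.coeff_divX
  have hqdeg : q.natDegree = n - 1 := by
    rw [hq, natDegree_divX_eq_natDegree_tsub_one, hpdeg]
  have hqmonic : q.Monic := by
    rw [Monic, leadingCoeff, hqdeg]
    have : p.coeff n = 1 := by rw [← hpdeg]; exact hmonic
    calc q.coeff (n - 1) = p.coeff (n - 1 + 1) := p.coeff_divX
      _ = 1 := by rw [Nat.sub_add_cancel hn, this]
  have hq0' : 0 < q.eval 0 := by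
    apply monic_pos_at_zero q hqmonic
    intro t ht hroot
    have hproot : p.IsRoot t := by
      rw [← hpq, IsRoot.def, eval_mul, eval_X, hroot.eq_zero, zero_mul]
    have hcroot : (p.map (algebraMap ℝ ℂ)).IsRoot (algebraMap ℝ ℂ t) := by
      rw [IsRoot, eval_map, eval₂_at_apply, hproot.eq_zero, map_zero]
    by_cases htz : t = 0
    · rw [htz] at hroot
      rw [IsRoot.def, ← coeff_zero_eq_eval_zero] at hroot
      rw [hq0] at hroot
      exact hc1 hroot
    · have := hre _ hcroot (by simpa using htz)
      simp only [Complex.coe_algebraMap, Complex.ofReal_re] at this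
      exact absurd this (not_lt.2 (by simpa using ht))
  rwa [← coeff_zero_eq_eval_zero, hq0] at hq0'
lemma small_kappa {n : ℕ} (hn : 0 < n) (A J2 J4 : Matrix (Fin n) (Fin n) ℝ)
    (κh : ℝ) (hκh : 0 < κh)
    (hdet : ∀ κ : ℝ, 0 < κ → κ < κh → 0 < (-(A + κ^2 • J2 + κ^4 • J4)).det)
    (hmult : ((A.charpoly).map (algebraMap ℝ ℂ)).rootMultiplicity 0 = 1)
    (hre : ∀ z : ℂ, ((A.charpoly).map (algebraMap ℝ ℂ)).IsRoot z → z ≠ 0 → z.re < 0) :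
    ∃ κ' : ℝ, 0 < κ' ∧ ∀ κ : ℝ, 0 < κ → κ < κ' → ∀ μ : ℂ,
      (((A + κ^2 • J2 + κ^4 • J4).charpoly).map (algebraMap ℝ ℂ)).IsRoot μ → μ.re < 0 := by
  set φ := algebraMap ℝ ℂ with hφdef
  set Jt : Matrix (Fin n) (Fin n) (Polynomial ℝ) :=
    A.map Polynomial.C + (X^2 : Polynomial ℝ) • J2.map Polynomial.C
      + (X^4 : Polynomial ℝ) • J4.map Polynomial.C with hJtdef
  set P : Polynomial (Polynomial ℝ) := Jt.charpoly with hPdef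
  have hmap : ∀ κ : ℝ, Jt.map (evalRingHom κ) = A + κ^2 • J2 + κ^4 • J4 := by
    intro κ
    ext i j
    simp [hJtdef, Matrix.map_apply, Matrix.add_apply, Matrix.smul_apply, smul_eq_mul]
    ring
  have hchar : ∀ κ : ℝ, (A + κ^2 • J2 + κ^4 • J4).charpoly = P.map (evalRingHom κ) := by
    intro κ
    rw [← hmap κ, Matrix.charpoly_map]
  have hA0 : A + (0:ℝ)^2 • J2 + (0:ℝ)^4 • J4 = A := by norm_num
  set c : ℕ → ℝ → ℂ := fun k κ => (((P.coeff k).eval κ : ℝ) : ℂ) with hcdef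
  have hcoeff : ∀ (κ : ℝ) (k : ℕ),
      ((A + κ^2 • J2 + κ^4 • J4).charpoly.map φ).coeff k = c k κ := by
    intro κ k
    rw [hchar, coeff_map, coeff_map]
    simp [hcdef, hφdef, Complex.coe_algebraMap]
  have hdeg : ∀ κ : ℝ, ((A + κ^2 • J2 + κ^4 • J4).charpoly.map φ).natDegree < n + 1 := by
    intro κ
    apply Nat.lt_succ_of_le
    refine le_trans natDegree_map_le ?_
    rw [Matrix.charpoly_natDegree_eq_dim, Fintype.card_fin]
  have heval : ∀ (κ : ℝ) (z : ℂ), ((A + κ^2 • J2 + κ^4 • J4).charpoly.map φ).eval z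
      = ∑ k ∈ Finset.range (n+1), c k κ * z ^ k := by
    intro κ z
    rw [eval_eq_sum_range' (hdeg κ)]
    exact Finset.sum_congr rfl fun k _ => by rw [hcoeff]
  set G : ℝ → ℂ → ℂ → ℂ := fun κ x y =>
    ∑ k ∈ Finset.range (n+1), c k κ * ∑ i ∈ Finset.range k, x^i * y^(k-1-i) with hGdef
  have hGdiff : ∀ (κ : ℝ) (x y : ℂ),
      ((A + κ^2 • J2 + κ^4 • J4).charpoly.map φ).eval x
        - ((A + κ^2 • J2 + κ^4 • J4).charpoly.map φ).eval y = G κ x y * (x - y) := by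
    intro κ x y
    rw [heval, heval, ← Finset.sum_sub_distrib, Finset.sum_mul]
    refine Finset.sum_congr rfl fun k _ => ?_
    rw [mul_assoc, geom_sum₂_mul, mul_sub]
  have hccont : ∀ k : ℕ, Continuous (c k) := by
    intro k
    exact Complex.continuous_ofReal.comp (P.coeff k).continuous
  have hGcont : Continuous fun p : ℝ × ℂ × ℂ => G p.1 p.2.1 p.2.2 := by
    apply continuous_finset_sum
    intro k _
    apply Continuous.mul
    · exact (hccont k).comp continuous_fst
    · apply continuous_finset_sum
      intro i _
      exact ((continuous_fst.comp continuous_snd).pow i).mul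
        ((continuous_snd.comp continuous_snd).pow (k-1-i))
  have hG000 : G 0 0 0 = c 1 0 := by
    rw [hGdef]
    simp only []
    rw [Finset.sum_eq_single 1]
    · rw [geom00, if_pos rfl, mul_one]
    · intro k _ hk1
      rw [geom00, if_neg hk1, mul_zero]
    · intro h1
      exact absurd (Finset.mem_range.2 (by omega)) h1
  have hc10 : 0 < (c 1 0).re := by
    have h1 := hcoeff 0 1
    rw [hA0] at h1
    rw [← h1, coeff_map]
    simpa [hφdef] using coeff_one_pos hn A hmult hre
  have hpos0 : 0 < (G 0 0 0).re := by rw [hG000]; exact hc10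
  have hopen : IsOpen {p : ℝ × ℂ × ℂ | 0 < (G p.1 p.2.1 p.2.2).re} :=
    isOpen_lt continuous_const (Complex.continuous_re.comp hGcont)
  have hmem : ((0:ℝ), ((0:ℂ), (0:ℂ))) ∈ {p : ℝ × ℂ × ℂ | 0 < (G p.1 p.2.1 p.2.2).re} := hpos0
  obtain ⟨δ, hδpos, hball⟩ := Metric.isOpen_iff.1 hopen _ hmem
  have hδ : ∀ (κ : ℝ) (x y : ℂ), |κ| < δ → ‖x‖ < δ → ‖y‖ < δ →
      0 < (G κ x y).re := by
    intro κ x y h1 h2 h3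
    have : ((κ, (x, y)) : ℝ × ℂ × ℂ) ∈ Metric.ball ((0:ℝ), ((0:ℂ), (0:ℂ))) δ := by
      rw [Metric.mem_ball, Prod.dist_eq, Prod.dist_eq]
      apply max_lt
      · simpa [Real.dist_eq] using h1
      · apply max_lt
        · simpa [Complex.dist_eq] using h2
        · simpa [Complex.dist_eq] using h3
    exact hball this
  have hval0 : ∀ κ : ℝ, ((A + κ^2 • J2 + κ^4 • J4).charpoly.map φ).eval 0
      = φ ((-(A + κ^2 • J2 + κ^4 • J4)).det) := by
    intro κ
    rw [eval_map, show (0:ℂ) = φ 0 by simp, eval₂_at_apply]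
    rw [charpoly_eval_zero]
  by_contra hcon
  push_neg at hcon
  have hsel : ∀ j : ℕ, ∃ κ : ℝ, 0 < κ ∧ κ < min κh 1 / (j+1) ∧ ∃ μ : ℂ,
      (((A + κ^2 • J2 + κ^4 • J4).charpoly).map φ).IsRoot μ ∧ 0 ≤ μ.re := by
    intro j
    exact hcon (min κh 1 / (j+1)) (by positivity)
  choose κs hκpos hκlt μs hroot hμre using hsel
  have hminpos : 0 < min κh 1 := lt_min hκh one_pos
  have hκlt' : ∀ j : ℕ, κs j < min κh 1 := by
    intro j
    refine lt_of_lt_of_le (hκlt j) (div_le_self hminpos.le ?_)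
    exact_mod_cast Nat.succ_le_succ (Nat.zero_le j)
  have hκh' : ∀ j, κs j < κh := fun j => lt_of_lt_of_le (hκlt' j) (min_le_left _ _)
  have hκ1 : ∀ j, κs j ≤ 1 := fun j => le_of_lt (lt_of_lt_of_le (hκlt' j) (min_le_right _ _))
  have hκ0 : Filter.Tendsto κs Filter.atTop (nhds 0) := by
    apply squeeze_zero (fun j => (hκpos j).le) (fun j => (hκlt j).le)
    have h1 : Filter.Tendsto (fun j : ℕ => 1 / ((j:ℝ)+1)) Filter.atTop (nhds 0) :=
      tendsto_one_div_add_atTop_nhds_zero_nat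
    have := h1.const_mul (min κh 1)
    rw [mul_zero] at this
    convert this using 2 with j
    rw [div_eq_mul_one_div]
  set R : ℝ := (∑ i, ∑ j, |A i j|) + (∑ i, ∑ j, |J2 i j|) + (∑ i, ∑ j, |J4 i j|) with hRdef
  have hbound : ∀ j, ‖μs j‖ ≤ R := by
    intro j
    obtain ⟨v, hv, hmv⟩ := eig_vector _ _ (hroot j)
    refine le_trans (eig_abs_le _ _ v hv hmv) ?_
    rw [hRdef]
    have h2 : (κs j)^2 ≤ 1 := pow_le_one₀ (hκpos j).le (hκ1 j)
    have h4 : (κs j)^4 ≤ 1 := pow_le_one₀ (hκpos j).le (hκ1 j)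
    have hentry : ∀ i i' : Fin n, |(A + (κs j)^2 • J2 + (κs j)^4 • J4) i i'|
        ≤ |A i i'| + |J2 i i'| + |J4 i i'| := by
      intro i i'
      have he : (A + (κs j)^2 • J2 + (κs j)^4 • J4) i i'
          = A i i' + (κs j)^2 * J2 i i' + (κs j)^4 * J4 i i' := by
        simp [Matrix.add_apply, Matrix.smul_apply, smul_eq_mul]
      rw [he]
      refine le_trans (abs_add_three _ _ _) ?_
      have hb2 : |(κs j)^2 * J2 i i'| ≤ |J2 i i'| := by
        rw [abs_mul]
        exact mul_le_of_le_one_left (abs_nonneg _) (by rw [abs_of_nonneg (by positivity)]; exact h2)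
      have hb4 : |(κs j)^4 * J4 i i'| ≤ |J4 i i'| := by
        rw [abs_mul]
        exact mul_le_of_le_one_left (abs_nonneg _) (by rw [abs_of_nonneg (by positivity)]; exact h4)
      linarith
    calc (∑ i, ∑ i', |(A + (κs j)^2 • J2 + (κs j)^4 • J4) i i'|)
        ≤ ∑ i, ∑ i', (|A i i'| + |J2 i i'| + |J4 i i'|) :=
          Finset.sum_le_sum fun i _ => Finset.sum_le_sum fun i' _ => hentry i i'
      _ = (∑ i, ∑ i', |A i i'|) + (∑ i, ∑ i', |J2 i i'|) + (∑ i, ∑ i', |J4 i i'|) := by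
          simp [Finset.sum_add_distrib]
  obtain ⟨μ0, hμ0mem, ψ, hψ, hψtend⟩ := (isCompact_closedBall (0:ℂ) R).tendsto_subseq
    (fun j => Metric.mem_closedBall.2 (by simpa [Complex.dist_eq] using hbound j))
  have hκψ : Filter.Tendsto (fun j => κs (ψ j)) Filter.atTop (nhds 0) :=
    hκ0.comp hψ.tendsto_atTop
  have hFcont : Continuous fun p : ℝ × ℂ => ∑ k ∈ Finset.range (n+1), c k p.1 * p.2^k := by
    apply continuous_finset_sum
    intro k _
    exact ((hccont k).comp continuous_fst).mul (continuous_snd.pow k)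
  have hμ0root : ((A.charpoly).map φ).IsRoot μ0 := by
    have h1 : Filter.Tendsto (fun j => ∑ k ∈ Finset.range (n+1), c k (κs (ψ j)) * (μs (ψ j))^k)
        Filter.atTop (nhds (∑ k ∈ Finset.range (n+1), c k 0 * μ0^k)) := by
      have := (hFcont.tendsto ((0:ℝ), μ0)).comp (hκψ.prodMk_nhds hψtend)
      exact this
    have h2 : (fun j => ∑ k ∈ Finset.range (n+1), c k (κs (ψ j)) * (μs (ψ j))^k)
        = fun _ => (0:ℂ) := by
      funext j
      rw [← heval]
      exact (hroot (ψ j)).eq_zero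
    rw [h2] at h1
    have h3 : (∑ k ∈ Finset.range (n+1), c k 0 * μ0^k) = 0 :=
      tendsto_nhds_unique h1 tendsto_const_nhds
    have h4 := heval 0 μ0
    rw [hA0] at h4
    rw [IsRoot, h4]
    exact h3
  have hμ0re : 0 ≤ μ0.re := by
    apply ge_of_tendsto (Complex.continuous_re.continuousAt.tendsto.comp hψtend)
    exact Filter.Eventually.of_forall fun j => hμre (ψ j)
  have hμ00 : μ0 = 0 := by
    by_contra hne
    exact absurd (hre μ0 hμ0root hne) (not_lt.2 hμ0re)
  rw [hμ00] at hψtend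
  have hev : ∀ᶠ j in Filter.atTop, κs (ψ j) < δ ∧ ‖μs (ψ j)‖ < δ := by
    have e1 := (Metric.tendsto_nhds.mp hκψ) δ hδpos
    have e2 := (Metric.tendsto_nhds.mp hψtend) δ hδpos
    filter_upwards [e1, e2] with j h1 h2
    constructor
    · rw [Real.dist_eq, sub_zero] at h1
      exact lt_of_le_of_lt (le_abs_self _) h1
    · rwa [Complex.dist_eq, sub_zero] at h2
  obtain ⟨j, hjκ, hjμ⟩ := hev.exists
  set κ := κs (ψ j) with hκdef
  set x := μs (ψ j) with hxdef
  have hκδ : |κ| < δ := by rw [abs_of_pos (hκpos (ψ j))]; exact hjκ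
  have hroot' : (((A + κ^2 • J2 + κ^4 • J4).charpoly).map φ).IsRoot x := hroot (ψ j)
  have hdetκ : 0 < (-(A + κ^2 • J2 + κ^4 • J4)).det := hdet κ (hκpos (ψ j)) (hκh' (ψ j))
  by_cases him : x.im = 0
  · -- real case
    have hx0 : x ≠ 0 := by
      intro hx
      have := hroot'.eq_zero
      rw [hx] at this
      rw [hval0] at this
      have h0 : (-(A + κ^2 • J2 + κ^4 • J4)).det = 0 :=
        (algebraMap ℝ ℂ).injective (by simpa [hφdef] using this)
      linarith
    have hxre : 0 < x.re := by
      rcases lt_or_eq_of_le (hμre (ψ j)) with h | h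
      · exact h
      · exfalso; exact hx0 (Complex.ext h.symm him)
    have hGx : G κ x 0 * x = -φ ((-(A + κ^2 • J2 + κ^4 • J4)).det) := by
      have := hGdiff κ x 0
      rw [hroot'.eq_zero, hval0, zero_sub, sub_zero] at this
      rw [← this]
    have hre' := congrArg Complex.re hGx
    rw [Complex.mul_re, him, mul_zero, sub_zero] at hre'
    have hφre : (-φ ((-(A + κ^2 • J2 + κ^4 • J4)).det)).re
        = -(-(A + κ^2 • J2 + κ^4 • J4)).det := by
      simp [hφdef]
    rw [hφre] at hre'
    have hGpos := hδ κ x 0 hκδ hjμ (by simpa using hδpos)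
    nlinarith
  · -- nonreal case
    set y := (starRingEnd ℂ) x with hydef
    have hmapconj : ((A + κ^2 • J2 + κ^4 • J4).charpoly.map φ).map (starRingEnd ℂ)
        = (A + κ^2 • J2 + κ^4 • J4).charpoly.map φ := by
      rw [Polynomial.map_map]
      congr 1
      ext r
      simp [hφdef, Complex.conj_ofReal]
    have hconjroot : (((A + κ^2 • J2 + κ^4 • J4).charpoly).map φ).IsRoot y := by
      have : ((A + κ^2 • J2 + κ^4 • J4).charpoly.map φ).eval y
          = (starRingEnd ℂ) (((A + κ^2 • J2 + κ^4 • J4).charpoly.map φ).eval x) := by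
        conv_lhs => rw [← hmapconj]
        rw [eval_map, hydef, eval₂_at_apply]
      rw [IsRoot, this, hroot'.eq_zero, map_zero]
    have hxy : x - y ≠ 0 := by
      rw [sub_ne_zero]
      intro h
      exact him (Complex.conj_eq_iff_im.1 h.symm)
    have hG0 : G κ x y = 0 := by
      have := hGdiff κ x y
      rw [hroot'.eq_zero, hconjroot.eq_zero, sub_zero] at this
      exact (mul_eq_zero.1 this.symm).resolve_right hxy
    have hGpos := hδ κ x y hκδ hjμ (by rwa [hydef, Complex.norm_conj])
    rw [hG0] at hGpos
    simp at hGpos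
lemma some_eig_pos {n : ℕ} (hn : 0 < n) (M : Matrix (Fin n) (Fin n) ℝ)
    (hdet : (-M).det < 0) :
    ∃ μ : ℂ, ((M.charpoly).map (algebraMap ℝ ℂ)).IsRoot μ ∧ 0 < μ.re := by
  set p := M.charpoly with hp
  have hmonic : p.Monic := M.charpoly_monic
  have h0 : p.eval 0 < 0 := by rw [hp, charpoly_eval_zero]; exact hdet
  have hdeg : 0 < p.degree := by
    rw [← natDegree_pos_iff_degree_pos, hp, Matrix.charpoly_natDegree_eq_dim, Fintype.card_fin]
    exact hn
  have htend := Polynomial.tendsto_atTop_of_leadingCoeff_nonneg p hdeg (by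
    rw [hmonic.leadingCoeff]; norm_num)
  obtain ⟨x0, hx0⟩ := (htend.eventually_ge_atTop 1).exists_forall_of_atTop
  have hx1 : (1:ℝ) ≤ p.eval (max x0 0) := hx0 _ (le_max_left _ _)
  have hmem : (0:ℝ) ∈ Set.Icc (p.eval 0) (p.eval (max x0 0)) := ⟨h0.le, by linarith⟩
  obtain ⟨s, hs, hps0⟩ := intermediate_value_Icc (le_max_right x0 0) p.continuous.continuousOn hmem
  have hps : eval s p = 0 := hps0
  have hs0 : s ≠ 0 := by
    intro h
    rw [h] at hps
    rw [hps] at h0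
    exact lt_irrefl _ h0
  have hspos : 0 < s := lt_of_le_of_ne hs.1 (Ne.symm hs0)
  refine ⟨(s : ℂ), ?_, by simpa using hspos⟩
  rw [IsRoot, eval_map, show ((s:ℝ):ℂ) = algebraMap ℝ ℂ s from rfl, eval₂_at_apply, hps, map_zero]

lemma quad_le' {n : ℕ} (A : Matrix (Fin n) (Fin n) ℝ) (x : Fin n → ℝ) :
    x ⬝ᵥ A.mulVec x ≤ (∑ i, ∑ j, |A i j|) * (∑ i, x i ^ 2) := by
  set s : ℝ := ∑ i, x i ^ 2 with hs
  have hs0 : 0 ≤ s := Finset.sum_nonneg fun i _ => sq_nonneg _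
  have hbd : ∀ i, |x i| ≤ Real.sqrt s := by
    intro i
    rw [← Real.sqrt_sq_eq_abs]
    exact Real.sqrt_le_sqrt (Finset.single_le_sum (fun j _ => sq_nonneg (x j)) (Finset.mem_univ i))
  have hprod : ∀ i j, |x i| * |x j| ≤ s := by
    intro i j
    calc |x i| * |x j| ≤ Real.sqrt s * Real.sqrt s :=
      mul_le_mul (hbd i) (hbd j) (abs_nonneg _) (Real.sqrt_nonneg _)
    _ = s := Real.mul_self_sqrt hs0
  calc x ⬝ᵥ A.mulVec x = ∑ i, ∑ j, x i * (A i j * x j) := by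
        simp [dotProduct, mulVec, Finset.mul_sum]
    _ ≤ ∑ i, ∑ j, |A i j| * s := by
        refine Finset.sum_le_sum fun i _ => Finset.sum_le_sum fun j _ => ?_
        calc x i * (A i j * x j) ≤ |x i * (A i j * x j)| := le_abs_self _
          _ = |A i j| * (|x i| * |x j|) := by rw [abs_mul, abs_mul]; ring
          _ ≤ |A i j| * s := mul_le_mul_of_nonneg_left (hprod i j) (abs_nonneg _)
    _ = (∑ i, ∑ j, |A i j|) * s := by
        rw [Finset.sum_mul]
        exact Finset.sum_congr rfl fun i _ => (Finset.sum_mul _ _ _).symm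

lemma quad_bound {n : ℕ} (hn : 0 < n) (S : Matrix (Fin n) (Fin n) ℝ)
    (hS : ∀ x : Fin n → ℝ, x ≠ 0 → x ⬝ᵥ S.mulVec x < 0) :
    ∃ c : ℝ, 0 < c ∧ ∀ x : Fin n → ℝ, x ⬝ᵥ S.mulVec x ≤ -c * (∑ i, x i ^ 2) := by
  set K : Set (Fin n → ℝ) := {x | ∑ i, x i ^ 2 = 1} with hK
  have hcont : Continuous fun x : Fin n → ℝ => ∑ i, x i ^ 2 :=
    continuous_finset_sum _ fun i _ => (continuous_apply i).pow 2
  have hQcont : Continuous fun x : Fin n → ℝ => x ⬝ᵥ S.mulVec x := by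
    have : (fun x : Fin n → ℝ => x ⬝ᵥ S.mulVec x)
        = fun x => ∑ i, x i * ∑ j, S i j * x j := by
      funext x
      simp [dotProduct, mulVec]
    rw [this]
    apply continuous_finset_sum
    intro i _
    exact (continuous_apply i).mul
      (continuous_finset_sum _ fun j _ => continuous_const.mul (continuous_apply j))
  have hclosed : IsClosed K := isClosed_eq hcont continuous_const
  have hsub : K ⊆ Metric.closedBall 0 1 := by
    intro x hx
    rw [Metric.mem_closedBall, dist_zero_right]
    rw [pi_norm_le_iff_of_nonneg zero_le_one]
    intro i
    rw [Real.norm_eq_abs, ← Real.sqrt_one, ← Real.sqrt_sq_eq_abs]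
    exact Real.sqrt_le_sqrt (by
      rw [← hx]
      exact Finset.single_le_sum (fun j _ => sq_nonneg (x j)) (Finset.mem_univ i))
  have hcompact : IsCompact K := (isCompact_closedBall 0 1).of_isClosed_subset hclosed hsub
  have hne : K.Nonempty := by
    refine ⟨fun i => if i = ⟨0, hn⟩ then 1 else 0, ?_⟩
    simp [hK, Finset.sum_ite_eq', sq]
  obtain ⟨x0, hx0K, hmax⟩ := hcompact.exists_isMaxOn hne hQcont.continuousOn
  have hx0ne : x0 ≠ 0 := by
    intro h
    rw [h] at hx0K
    simp [hK] at hx0K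
  refine ⟨-(x0 ⬝ᵥ S.mulVec x0), by simpa using hS x0 hx0ne, ?_⟩
  intro x
  by_cases hx : x = 0
  · simp [hx]
  · set s : ℝ := ∑ i, x i ^ 2 with hs
    have hspos : 0 < s := by
      obtain ⟨i, hi⟩ := Function.ne_iff.1 hx
      exact Finset.sum_pos' (fun j _ => sq_nonneg _) ⟨i, Finset.mem_univ i, pow_two_pos_of_ne_zero hi⟩
    set r : ℝ := Real.sqrt s with hr
    have hrpos : 0 < r := Real.sqrt_pos.2 hspos
    set u : Fin n → ℝ := r⁻¹ • x with hu
    have huK : u ∈ K := by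
      have : ∑ i, (r⁻¹ * x i) ^ 2 = r⁻¹^2 * s := by
        rw [Finset.mul_sum]
        exact Finset.sum_congr rfl fun i _ => by ring
      simp only [hK, Set.mem_setOf_eq, hu, Pi.smul_apply, smul_eq_mul]
      rw [this, hr, ← Real.sqrt_inv, Real.sq_sqrt (by positivity)]
      field_simp
    have hxu : x = r • u := by
      rw [hu, smul_smul, mul_inv_cancel₀ hrpos.ne', one_smul]
    have hscale : x ⬝ᵥ S.mulVec x = r^2 * (u ⬝ᵥ S.mulVec u) := by
      rw [hxu, smul_dotProduct, Matrix.mulVec_smul, dotProduct_smul]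
      simp [smul_eq_mul]; ring
    have hr2 : r^2 = s := Real.sq_sqrt hspos.le
    rw [hscale, hr2]
    have h1 : u ⬝ᵥ S.mulVec u ≤ x0 ⬝ᵥ S.mulVec x0 := hmax huK
    nlinarith [mul_le_mul_of_nonneg_left h1 hspos.le]
/-- (Theorem 2, sufficient condition, `Ψ⁻` branch) Under the structural assumptions on
`J₂, J₄` and on the spectrum of `B ⬝ diag(Δ) ⬝ C` for all `Δ ∈ 𝒟`, if
`Ψ⁻(κ) = min_{Δ ∈ 𝒟} det (-J(Δ,κ))` is initially positive and has a negative sign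
change, then some `Δ ∈ 𝒟` exhibits microphase separation. -/
theorem stmt10 (n m : ℕ) (B : Matrix (Fin n) (Fin m) ℝ) (C : Matrix (Fin m) (Fin n) ℝ)
    (Δlo Δhi : Fin m → ℝ) (hbounds : ∀ j, 0 ≤ Δlo j ∧ Δlo j ≤ Δhi j)
    (J2 J4 : Matrix (Fin n) (Fin n) ℝ) (hJ2 : J2.IsSymm) (hJ4 : J4.IsSymm)
    (hJ4nsd : ∀ x : Fin n → ℝ, x ⬝ᵥ J4.mulVec x ≤ 0)
    (hκbar : ∃ κbar : ℝ, 0 < κbar ∧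
      ∀ x : Fin n → ℝ, x ≠ 0 → x ⬝ᵥ (J2 + κbar ^ 2 • J4).mulVec x < 0)
    (hspec : ∀ Δ : Fin m → ℝ, (∀ j, Δlo j ≤ Δ j ∧ Δ j ≤ Δhi j) →
      (((B * Matrix.diagonal Δ * C).charpoly).map (algebraMap ℝ ℂ)).rootMultiplicity 0 = 1 ∧
      (∀ z : ℂ, (((B * Matrix.diagonal Δ * C).charpoly).map (algebraMap ℝ ℂ)).IsRoot z →
        z ≠ 0 → z.re < 0))
    (hPsiMinusInitPos : ∃ κhat : ℝ, 0 < κhat ∧ ∀ κ : ℝ, 0 < κ → κ < κhat →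
      ∀ Δ : Fin m → ℝ, (∀ j, Δlo j ≤ Δ j ∧ Δ j ≤ Δhi j) →
        0 < (-(Jmat B C J2 J4 Δ κ)).det)
    (hPsiMinusNeg : ∃ κstar : ℝ, 0 < κstar ∧ ∃ Δstar : Fin m → ℝ,
      (∀ j, Δlo j ≤ Δstar j ∧ Δstar j ≤ Δhi j) ∧
        (-(Jmat B C J2 J4 Δstar κstar)).det < 0) :
    ∃ Δ : Fin m → ℝ, (∀ j, Δlo j ≤ Δ j ∧ Δ j ≤ Δhi j) ∧ Microphase B C J2 J4 Δ := by
  obtain ⟨κstar, hκstarpos, Δstar, hΔstar, hdetneg⟩ := hPsiMinusNeg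
  rcases Nat.eq_zero_or_pos n with hn0 | hn
  · exfalso
    subst hn0
    rw [Matrix.det_isEmpty] at hdetneg
    linarith
  obtain ⟨κbar, hκbarpos, hκbarquad⟩ := hκbar
  obtain ⟨κh, hκhpos, hinit⟩ := hPsiMinusInitPos
  obtain ⟨hmult, hre⟩ := hspec Δstar hΔstar
  set A := B * Matrix.diagonal Δstar * C with hA
  have hJeq : ∀ κ : ℝ, Jmat B C J2 J4 Δstar κ = A + κ^2 • J2 + κ^4 • J4 := fun κ => rfl
  have hdet : ∀ κ : ℝ, 0 < κ → κ < κh → 0 < (-(A + κ^2 • J2 + κ^4 • J4)).det := by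
    intro κ h1 h2
    rw [← hJeq]
    exact hinit κ h1 h2 Δstar hΔstar
  obtain ⟨κ', hκ'pos, hsmall⟩ := small_kappa hn A J2 J4 κh hκhpos hdet hmult hre
  obtain ⟨c, hcpos, hcineq⟩ := quad_bound hn (J2 + κbar^2 • J4) hκbarquad
  set EA : ℝ := ∑ i, ∑ j, |A i j| with hEA
  have hEA0 : 0 ≤ EA := Finset.sum_nonneg fun i _ => Finset.sum_nonneg fun j _ => abs_nonneg _
  set κ2 : ℝ := max (max κbar (κstar + 1)) (Real.sqrt (EA / c) + 1) with hκ2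
  have hκ2bar : κbar ≤ κ2 := le_trans (le_max_left _ _) (le_max_left _ _)
  have hκ2star : κstar + 1 ≤ κ2 := le_trans (le_max_right _ _) (le_max_left _ _)
  have hκ2sq : Real.sqrt (EA / c) + 1 ≤ κ2 := le_max_right _ _
  have hκ2pos : 0 < κ2 := lt_of_lt_of_le (by linarith) hκ2star
  have hEAlt : EA < c * κ2^2 := by
    have h1 : Real.sqrt (EA / c) < κ2 := lt_of_lt_of_le (lt_add_one _) hκ2sq
    have h2 : Real.sqrt (EA/c) ^ 2 < κ2 ^ 2 := by
      apply pow_lt_pow_left₀ h1 (Real.sqrt_nonneg _)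
      norm_num
    rw [Real.sq_sqrt (div_nonneg hEA0 hcpos.le)] at h2
    calc EA = c * (EA / c) := by field_simp
      _ < c * κ2^2 := mul_lt_mul_of_pos_left h2 hcpos
  have hq2 : ∀ x : Fin n → ℝ, x ≠ 0 → x ⬝ᵥ (A + κ2^2 • J2 + κ2^4 • J4).mulVec x < 0 := by
    intro x hx
    have hsplit : x ⬝ᵥ (A + κ2^2 • J2 + κ2^4 • J4).mulVec x
        = x ⬝ᵥ A.mulVec x + κ2^2 * (x ⬝ᵥ (J2 + κbar^2 • J4).mulVec x)
          + (κ2^4 - κ2^2*κbar^2) * (x ⬝ᵥ J4.mulVec x) := by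
      simp only [Matrix.add_mulVec, Matrix.smul_mulVec, dotProduct_add, dotProduct_smul,
        smul_eq_mul]
      ring
    set s : ℝ := ∑ i, x i ^ 2 with hs
    have hspos : 0 < s := by
      obtain ⟨i, hi⟩ := Function.ne_iff.1 hx
      exact Finset.sum_pos' (fun j _ => sq_nonneg _)
        ⟨i, Finset.mem_univ i, pow_two_pos_of_ne_zero hi⟩
    have hb1 : x ⬝ᵥ A.mulVec x ≤ EA * s := quad_le' A x
    have hb2 : x ⬝ᵥ (J2 + κbar^2 • J4).mulVec x ≤ -c * s := hcineq x
    have hb3 : x ⬝ᵥ J4.mulVec x ≤ 0 := hJ4nsd x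
    have hco : 0 ≤ κ2^4 - κ2^2*κbar^2 := by
      have hbb : κbar^2 ≤ κ2^2 := pow_le_pow_left₀ hκbarpos.le hκ2bar 2
      nlinarith [sq_nonneg κ2]
    rw [hsplit]
    have h3 := mul_nonpos_of_nonneg_of_nonpos hco hb3
    nlinarith [mul_le_mul_of_nonneg_left hb2 (sq_nonneg κ2)]
  refine ⟨Δstar, hΔstar, min κ' κstar / 2, κstar, κ2, ?_, ?_, ?_, ?_, ?_, ?_⟩
  · exact div_pos (lt_min hκ'pos hκstarpos) two_pos
  · have := min_le_right κ' κstar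
    linarith
  · exact lt_of_lt_of_le (lt_add_one κstar) hκ2star
  · intro κ h1 h2 μ hμ
    rw [hJeq] at hμ
    have hκκ' : κ < κ' := by
      have := min_le_left κ' κstar
      linarith
    exact hsmall κ h1 hκκ' μ hμ
  · obtain ⟨μ, hμroot, hμre⟩ := some_eig_pos hn (Jmat B C J2 J4 Δstar κstar) hdetneg
    exact ⟨μ, hμroot, hμre⟩
  · intro μ hμ
    rw [hJeq] at hμ
    exact eig_re_lt_of_quadform _ hq2 μ hμ
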